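/- Let E be an exact couple system over a bounded poset I, and let b ≥ p ≥ q ≥ z and b' ≥ p' ≥ q' ≥ z' in I with z ≤ p' and q ≤ b'. Then there is a unique homomorphism d : S^{pz}_{bq} → S^{p'z'}_{b'q'} with the following property: for every x ∈ ker(d_{pqz}) and every y ∈ D_z with i_{z,q}(y) = k_{p,q}(x) (such a y exists since j_{q,z}(k_{p,q}(x)) = 0 and the triangle D_z → D_q → E^q_z is exact), d sends the class of x to the class of j_{p',q'}(i_{z,p'}(y)), which indeed lies in ker(d_{p'q'z'}). -/

import Mathlib

open Function

universe u v

/-- An exact couple system over a bounded poset `I`: abelian groups `E^p_q` for `q ≤ p`,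
functorial maps `ℓ`, boundary maps `k_{pq} : E^p_q → D_q` (where `D_p := E^p_⊥`), exact
triangles `D_q → D_p → E^p_q → D_q`, and naturality of `k`. -/
structure ExactCoupleSystem (I : Type u) [PartialOrder I] [BoundedOrder I] where
  /-- the abelian groups `E^p_q` -/
  E : ∀ p q : I, q ≤ p → AddCommGrpCat.{v}
  /-- the structure maps `ℓ : E^p_q → E^{p'}_{q'}` for `p ≤ p'`, `q ≤ q'` -/
  l : ∀ {p q p' q' : I} (h : q ≤ p) (h' : q' ≤ p'), p ≤ p' → q ≤ q' →
      (E p q h →+ E p' q' h')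
  /-- the boundary maps `k_{pq} : E^p_q → D_q` -/
  k : ∀ {p q : I} (h : q ≤ p), (E p q h →+ E q ⊥ bot_le)
  l_id : ∀ {p q : I} (h : q ≤ p), l h h le_rfl le_rfl = AddMonoidHom.id _
  l_comp : ∀ {p q p' q' p'' q'' : I} (h : q ≤ p) (h' : q' ≤ p') (h'' : q'' ≤ p'')
      (hp : p ≤ p') (hq : q ≤ q') (hp' : p' ≤ p'') (hq' : q' ≤ q''),
      (l h' h'' hp' hq').comp (l h h' hp hq) = l h h'' (hp.trans hp') (hq.trans hq')
  exact_ij : ∀ {p q : I} (h : q ≤ p),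
      (l (bot_le : (⊥ : I) ≤ q) (bot_le : (⊥ : I) ≤ p) h le_rfl).range =
        (l (bot_le : (⊥ : I) ≤ p) h le_rfl bot_le).ker
  exact_jk : ∀ {p q : I} (h : q ≤ p),
      (l (bot_le : (⊥ : I) ≤ p) h le_rfl bot_le).range = (k h).ker
  exact_ki : ∀ {p q : I} (h : q ≤ p),
      (k h).range = (l (bot_le : (⊥ : I) ≤ q) (bot_le : (⊥ : I) ≤ p) h le_rfl).ker
  k_nat : ∀ {p q p' q' : I} (h : q ≤ p) (h' : q' ≤ p') (hp : p ≤ p') (hq : q ≤ q'),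
      (l (bot_le : (⊥ : I) ≤ q) (bot_le : (⊥ : I) ≤ q') hq le_rfl).comp (k h) =
        (k h').comp (l h h' hp hq)

namespace ExactCoupleSystem

variable {I : Type u} [PartialOrder I] [BoundedOrder I] (X : ExactCoupleSystem.{u, v} I)

/-- `D_p := E^p_{−∞}`. -/
abbrev D (p : I) := X.E p ⊥ bot_le

/-- `i_{qp} : D_q → D_p`. -/
def i {q p : I} (h : q ≤ p) : X.D q →+ X.D p := X.l bot_le bot_le h le_rfl

/-- `j_{pq} : D_p → E^p_q`. -/
def j {q p : I} (h : q ≤ p) : X.D p →+ X.E p q h := X.l bot_le h le_rfl bot_le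

/-- The differential `d_{pqz} = j_{qz} ∘ k_{pq} : E^p_q → E^q_z`. -/
def dd {z q p : I} (hzq : z ≤ q) (hqp : q ≤ p) : X.E p q hqp →+ X.E q z hzq :=
  (X.j hzq).comp (X.k hqp)

/-- The S-term `S^{pz}_{bq} = ker(d_{pqz}) / im(d_{bpq})` of an exact couple system. -/
abbrev Sterm {z q p b : I} (hzq : z ≤ q) (hqp : q ≤ p) (hpb : p ≤ b) :=
  ↥(X.dd hzq hqp).ker ⧸ (X.dd hqp hpb).range.addSubgroupOf (X.dd hzq hqp).ker

/-- The class in `S^{pz}_{bq}` of an element `x ∈ ker(d_{pqz})`. -/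
def Scls {z q p b : I} (hzq : z ≤ q) (hqp : q ≤ p) (hpb : p ≤ b)
    {x : X.E p q hqp} (hx : x ∈ (X.dd hzq hqp).ker) : X.Sterm hzq hqp hpb :=
  QuotientAddGroup.mk ⟨x, hx⟩

lemma k_j {q p : I} (h : q ≤ p) (d : X.D p) : X.k h (X.j h d) = 0 := by
  have : X.j h d ∈ (X.k h).ker := by
    rw [← X.exact_jk h]; exact ⟨d, rfl⟩
  exact this

lemma exists_y {z q p : I} (hzq : z ≤ q) (hqp : q ≤ p) (x : X.E p q hqp)
    (hx : x ∈ (X.dd hzq hqp).ker) : ∃ y : X.D z, X.i hzq y = X.k hqp x := by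
  have hk : X.k hqp x ∈ (X.l (bot_le : (⊥ : I) ≤ q) hzq le_rfl bot_le).ker := hx
  rw [← X.exact_ij hzq] at hk
  exact hk

lemma mem_ker_jiy {z z' q' p' : I} (hzq' : z' ≤ q') (hqp' : q' ≤ p') (hzp' : z ≤ p')
    (y : X.D z) : X.j hqp' (X.i hzp' y) ∈ (X.dd hzq' hqp').ker := by
  show X.j hzq' (X.k hqp' (X.j hqp' (X.i hzp' y))) = 0
  rw [X.k_j, map_zero]

lemma cls_eq_of_i_eq {z q p b z' q' p' b' : I}
    (hzq : z ≤ q) (hqp : q ≤ p) (hpb : p ≤ b)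
    (hzq' : z' ≤ q') (hqp' : q' ≤ p') (hpb' : p' ≤ b')
    (hzp' : z ≤ p') (hqb' : q ≤ b')
    (y y' : X.D z) (h : X.i hzq y = X.i hzq y') :
    X.Scls hzq' hqp' hpb' (X.mem_ker_jiy hzq' hqp' hzp' y) =
      X.Scls hzq' hqp' hpb' (X.mem_ker_jiy hzq' hqp' hzp' y') := by
  unfold Scls
  rw [QuotientAddGroup.eq]
  have hyk : y' - y ∈ (X.k hzq).range := by
    rw [X.exact_ki hzq]
    show X.i hzq (y' - y) = 0
    rw [map_sub, h, sub_self]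
  obtain ⟨w, hw⟩ := hyk
  refine (AddSubgroup.mem_addSubgroupOf).2 ?_
  show -(X.j hqp' (X.i hzp' y)) + X.j hqp' (X.i hzp' y') ∈ (X.dd hqp' hpb').range
  have : -(X.j hqp' (X.i hzp' y)) + X.j hqp' (X.i hzp' y')
      = X.j hqp' (X.i hzp' (y' - y)) := by
    rw [map_sub, map_sub, neg_add_eq_sub]
  rw [this, ← hw]
  have hnat := X.k_nat hzq hpb' hqb' hzp'
  have hnatw : X.i hzp' (X.k hzq w) = X.k hpb' (X.l hzq hpb' hqb' hzp' w) := by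
    have := DFunLike.congr_fun hnat w
    simpa [AddMonoidHom.comp_apply, ExactCoupleSystem.i] using this
  rw [hnatw]
  exact ⟨X.l hzq hpb' hqb' hzp' w, rfl⟩

lemma Scls_congr {z q p b : I} (hzq : z ≤ q) (hqp : q ≤ p) (hpb : p ≤ b)
    {x x' : X.E p q hqp} (hx : x ∈ (X.dd hzq hqp).ker) (hx' : x' ∈ (X.dd hzq hqp).ker)
    (h : x = x') : X.Scls hzq hqp hpb hx = X.Scls hzq hqp hpb hx' := by
  subst h; rfl

end ExactCoupleSystem

/-- Differentials: for `z ≤ q ≤ p ≤ b` and `z' ≤ q' ≤ p' ≤ b'` with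
`z ≤ p'` and `q ≤ b'`, there is a unique homomorphism `d : S^{pz}_{bq} → S^{p'z'}_{b'q'}`
sending the class of `x` to the class of `j_{p'q'}(i_{z,p'}(y))` for any `y ∈ D_z` with
`i_{z,q}(y) = k_{pq}(x)`. -/
theorem statement11 {I : Type u} [PartialOrder I] [BoundedOrder I]
    (X : ExactCoupleSystem.{u, v} I) {z q p b z' q' p' b' : I}
    (hzq : z ≤ q) (hqp : q ≤ p) (hpb : p ≤ b)
    (hzq' : z' ≤ q') (hqp' : q' ≤ p') (hpb' : p' ≤ b')
    (hzp' : z ≤ p') (hqb' : q ≤ b') :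
    ∃! Dh : X.Sterm hzq hqp hpb →+ X.Sterm hzq' hqp' hpb',
      ∀ (x : X.E p q hqp) (hx : x ∈ (X.dd hzq hqp).ker)
        (y : X.D z) (_ : X.i hzq y = X.k hqp x)
        (hmem : X.j hqp' (X.i hzp' y) ∈ (X.dd hzq' hqp').ker),
        Dh (X.Scls hzq hqp hpb hx) = X.Scls hzq' hqp' hpb' hmem := by
  classical
  have hex : ∀ s : (X.dd hzq hqp).ker, ∃ y : X.D z, X.i hzq y = X.k hqp s.1 :=
    fun s => X.exists_y hzq hqp s.1 s.2
  let Y : (X.dd hzq hqp).ker → X.D z := fun s => (hex s).choose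
  have hY : ∀ s, X.i hzq (Y s) = X.k hqp s.1 := fun s => (hex s).choose_spec
  have ceq := fun y y' h => X.cls_eq_of_i_eq hzq hqp hpb hzq' hqp' hpb' hzp' hqb' y y' h
  let F : (X.dd hzq hqp).ker →+ X.Sterm hzq' hqp' hpb' :=
    { toFun := fun s => X.Scls hzq' hqp' hpb' (X.mem_ker_jiy hzq' hqp' hzp' (Y s))
      map_zero' := by
        have h0 : X.i hzq (Y 0) = X.i hzq 0 := by
          rw [hY, map_zero]
          show X.k hqp (0 : X.E p q hqp) = 0
          rw [map_zero]
        show X.Scls hzq' hqp' hpb' (X.mem_ker_jiy hzq' hqp' hzp' (Y 0)) = 0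
        refine (ceq (Y 0) 0 h0).trans ?_
        refine (X.Scls_congr hzq' hqp' hpb' _ (zero_mem _) ?_).trans rfl
        rw [map_zero, map_zero]
      map_add' := by
        intro s t
        have hadd : X.i hzq (Y (s + t)) = X.i hzq (Y s + Y t) := by
          rw [hY, map_add, hY, hY]
          show X.k hqp (s.1 + t.1) = _
          rw [map_add]
        show X.Scls hzq' hqp' hpb' (X.mem_ker_jiy hzq' hqp' hzp' (Y (s + t)))
            = X.Scls hzq' hqp' hpb' (X.mem_ker_jiy hzq' hqp' hzp' (Y s))
              + X.Scls hzq' hqp' hpb' (X.mem_ker_jiy hzq' hqp' hzp' (Y t))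
        refine (ceq (Y (s + t)) (Y s + Y t) hadd).trans ?_
        refine (X.Scls_congr hzq' hqp' hpb' _
          (add_mem (X.mem_ker_jiy hzq' hqp' hzp' (Y s))
            (X.mem_ker_jiy hzq' hqp' hzp' (Y t))) ?_).trans rfl
        rw [map_add, map_add] }
  have hF0 : ∀ s ∈ (X.dd hqp hpb).range.addSubgroupOf (X.dd hzq hqp).ker, F s = 0 := by
    intro s hs
    obtain ⟨u, hu⟩ := (AddSubgroup.mem_addSubgroupOf).1 hs
    have hk0 : X.k hqp s.1 = 0 := by
      rw [← hu]
      exact X.k_j hqp (X.k hpb u)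
    have h0 : X.i hzq (Y s) = X.i hzq 0 := by
      rw [hY, hk0, map_zero]
    show X.Scls hzq' hqp' hpb' (X.mem_ker_jiy hzq' hqp' hzp' (Y s)) = 0
    refine (ceq (Y s) 0 h0).trans ?_
    refine (X.Scls_congr hzq' hqp' hpb' _ (zero_mem _) ?_).trans rfl
    rw [map_zero, map_zero]
  have key : ∀ (x : X.E p q hqp) (hx : x ∈ (X.dd hzq hqp).ker)
      (y : X.D z) (hy : X.i hzq y = X.k hqp x)
      (hmem : X.j hqp' (X.i hzp' y) ∈ (X.dd hzq' hqp').ker),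
      QuotientAddGroup.lift _ F hF0 (X.Scls hzq hqp hpb hx)
        = X.Scls hzq' hqp' hpb' hmem := by
    intro x hx y hy hmem
    have h1 : QuotientAddGroup.lift _ F hF0 (X.Scls hzq hqp hpb hx) = F ⟨x, hx⟩ := rfl
    rw [h1]
    have hi : X.i hzq (Y ⟨x, hx⟩) = X.i hzq y := by rw [hY, hy]
    show X.Scls hzq' hqp' hpb' (X.mem_ker_jiy hzq' hqp' hzp' (Y ⟨x, hx⟩))
        = X.Scls hzq' hqp' hpb' hmem
    exact (ceq (Y ⟨x, hx⟩) y hi).trans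
      (X.Scls_congr hzq' hqp' hpb' _ hmem rfl)
  refine ⟨QuotientAddGroup.lift _ F hF0, fun x hx y hy hmem => key x hx y hy hmem, ?_⟩
  intro G hG
  ext c
  obtain ⟨x, hx⟩ := c
  obtain ⟨y, hy⟩ := X.exists_y hzq hqp x hx
  have hmem := X.mem_ker_jiy hzq' hqp' hzp' y
  exact (hG x hx y hy hmem).trans (key x hx y hy hmem).symm
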